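/- Let K ⊆ ℝ^d be compact with d ≥ 1, α ∈ (0,1), and let n ≥ 1, k be integers with k > (d+n)/α. Suppose F : K → ℝ^{k×n} is α-Hölder and each F_x is injective. Define f : K × ℝ^n → ℝ^k by f(x,v) = F_x v. Then the set ∪_{x∈K} range(F_x) = range(f) is closed under multiplication by nonnegative scalars and has k-dimensional Hausdorff measure zero. -/

import Mathlib

open MeasureTheory Set
open scoped NNReal ENNReal

private lemma mulVec_norm_le' {k n : ℕ} (M : Fin k → Fin n → ℝ) (v : Fin n → ℝ) {c : ℝ}
    (hc : 0 ≤ c) (hM : ∀ i j, |M i j| ≤ c) :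
    ‖(Matrix.of M).mulVec v‖ ≤ n * c * ‖v‖ := by
  have hnn : (0:ℝ) ≤ n * c * ‖v‖ := by positivity
  rw [pi_norm_le_iff_of_nonneg hnn]
  intro i
  have : (Matrix.of M).mulVec v i = ∑ j, M i j * v j := by
    simp [Matrix.mulVec, dotProduct]
  rw [Real.norm_eq_abs, this]
  calc |∑ j, M i j * v j| ≤ ∑ j, |M i j * v j| := Finset.abs_sum_le_sum_abs _ _
    _ ≤ ∑ _j : Fin n, c * ‖v‖ := by
        refine Finset.sum_le_sum fun j _ => ?_
        rw [abs_mul]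
        exact mul_le_mul (hM i j) (by simpa [Real.norm_eq_abs] using norm_le_pi_norm v j)
          (abs_nonneg _) hc
    _ = n * c * ‖v‖ := by simp [Finset.sum_const, mul_assoc]

private lemma holderOnWith_of_dist_le' {X Y : Type*} [PseudoMetricSpace X] [PseudoMetricSpace Y]
    {C r : ℝ≥0} {f : X → Y} {s : Set X}
    (h : ∀ x ∈ s, ∀ y ∈ s, dist (f x) (f y) ≤ C * dist x y ^ (r : ℝ)) :
    HolderOnWith C r f s := by
  intro x hx y hy
  rw [edist_dist, edist_dist, ENNReal.ofReal_rpow_of_nonneg dist_nonneg r.coe_nonneg,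
    ← ENNReal.ofReal_coe_nnreal, ← ENNReal.ofReal_mul C.coe_nonneg]
  exact ENNReal.ofReal_le_ofReal (h x hx y hy)

/-- For `F : K → ℝ^{k×n}` `α`-Hölder with each `F_x` injective and `αk > d + n`, the set
`⋃_{x∈K} range F_x = range f`, where `f(x,v) = F_x v`, is closed under multiplication by
nonnegative scalars and has zero `k`-dimensional Hausdorff measure. -/
theorem stmt11 (d n k : ℕ) (hd : 1 ≤ d) (hn : 1 ≤ n) (α C : ℝ)
    (hα : 0 < α) (hα1 : α < 1) (hC : 0 < C) (hk : (d + n : ℝ) < α * k)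
    (K : Set (Fin d → ℝ)) (hK : IsCompact K)
    (F : K → (Fin k → Fin n → ℝ))
    (hF : ∀ x y : K, dist (F x) (F y) ≤ C * dist x y ^ α)
    (hFinj : ∀ x : K, Function.Injective fun v => (Matrix.of (F x)).mulVec v) :
    (∀ c : ℝ, 0 ≤ c → ∀ y ∈ Set.range (fun p : K × (Fin n → ℝ) =>
        (Matrix.of (F p.1)).mulVec p.2),
      c • y ∈ Set.range (fun p : K × (Fin n → ℝ) => (Matrix.of (F p.1)).mulVec p.2)) ∧
    μH[k] (Set.range fun p : K × (Fin n → ℝ) => (Matrix.of (F p.1)).mulVec p.2) = 0 := by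
  constructor
  · rintro c hc y ⟨p, rfl⟩
    exact ⟨(p.1, c • p.2), by simp [Matrix.mulVec_smul]⟩
  · set f : K × (Fin n → ℝ) → Fin k → ℝ :=
      fun p => (Matrix.of (F p.1)).mulVec p.2 with hf_def
    set r : ℝ≥0 := α.toNNReal with hr_def
    have hrα : (r : ℝ) = α := Real.coe_toNNReal α hα.le
    have hr : 0 < r := by
      rw [← NNReal.coe_lt_coe, hrα]; exact hα
    -- local Hölder property
    have hloc : ∀ x : K × (Fin n → ℝ), ∃ C' : ℝ≥0, ∃ s ∈ nhds x, HolderOnWith C' r f s := by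
      intro x₀
      set B : ℝ := n * C * (‖x₀.2‖ + 1) + n * (‖F x₀.1‖ + C) * 2 ^ (1 - α) with hB_def
      have hB : 0 ≤ B := by positivity
      refine ⟨B.toNNReal, Metric.ball x₀ 1, Metric.ball_mem_nhds _ one_pos, ?_⟩
      apply holderOnWith_of_dist_le'
      intro p hp q hq
      rw [Real.coe_toNNReal B hB, hrα]
      have hp1 : dist p x₀ < 1 := hp
      have hq1 : dist q x₀ < 1 := hq
      -- bounds on components
      have hfst : ∀ u w : K × (Fin n → ℝ), dist u.1 w.1 ≤ dist u w := fun u w =>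
        le_max_left _ _
      have hsnd : ∀ u w : K × (Fin n → ℝ), dist u.2 w.2 ≤ dist u w := fun u w =>
        le_max_right _ _
      -- entry bound for difference matrix
      have hdiff : ∀ i j, |F p.1 i j - F q.1 i j| ≤ C * dist p.1 q.1 ^ α := by
        intro i j
        calc |F p.1 i j - F q.1 i j| = dist (F p.1 i j) (F q.1 i j) := (Real.dist_eq _ _).symm
          _ ≤ dist (F p.1 i) (F q.1 i) := dist_le_pi_dist _ _ j
          _ ≤ dist (F p.1) (F q.1) := dist_le_pi_dist _ _ i
          _ ≤ C * dist p.1 q.1 ^ α := hF _ _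
      -- entry bound for F q.1
      have hent : ∀ i j, |F q.1 i j| ≤ ‖F x₀.1‖ + C := by
        intro i j
        have h1 : |F x₀.1 i j| ≤ ‖F x₀.1‖ := by
          calc |F x₀.1 i j| = ‖F x₀.1 i j‖ := (Real.norm_eq_abs _).symm
            _ ≤ ‖F x₀.1 i‖ := norm_le_pi_norm _ j
            _ ≤ ‖F x₀.1‖ := norm_le_pi_norm _ i
        have h2 : |F q.1 i j - F x₀.1 i j| ≤ C := by
          have hd1 : dist q.1 x₀.1 ≤ 1 := ((hfst q x₀).trans hq1.le)
          have : dist q.1 x₀.1 ^ α ≤ 1 :=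
            Real.rpow_le_one dist_nonneg hd1 hα.le
          calc |F q.1 i j - F x₀.1 i j| = dist (F q.1 i j) (F x₀.1 i j) := (Real.dist_eq _ _).symm
            _ ≤ dist (F q.1 i) (F x₀.1 i) := dist_le_pi_dist _ _ j
            _ ≤ dist (F q.1) (F x₀.1) := dist_le_pi_dist _ _ i
            _ ≤ C * dist q.1 x₀.1 ^ α := hF _ _
            _ ≤ C * 1 := by nlinarith
            _ = C := mul_one C
        calc |F q.1 i j| ≤ |F x₀.1 i j| + |F q.1 i j - F x₀.1 i j| := by
              have := abs_sub_abs_le_abs_sub (F q.1 i j) (F x₀.1 i j)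
              linarith [abs_sub_comm (F q.1 i j) (F x₀.1 i j)]
          _ ≤ ‖F x₀.1‖ + C := add_le_add h1 h2
      -- triangle inequality split
      have hsplit : dist (f p) (f q) ≤
          ‖(Matrix.of (fun i j => F p.1 i j - F q.1 i j)).mulVec p.2‖ +
          ‖(Matrix.of (F q.1)).mulVec (p.2 - q.2)‖ := by
        have h1 : f p - f q = (Matrix.of (fun i j => F p.1 i j - F q.1 i j)).mulVec p.2 +
            (Matrix.of (F q.1)).mulVec (p.2 - q.2) := by
          simp only [hf_def]
          rw [Matrix.mulVec_sub]
          have : (Matrix.of (fun i j => F p.1 i j - F q.1 i j)).mulVec p.2 =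
              (Matrix.of (F p.1)).mulVec p.2 - (Matrix.of (F q.1)).mulVec p.2 := by
            rw [← Matrix.sub_mulVec]; rfl
          rw [this]; abel
        rw [dist_eq_norm, h1]
        exact norm_add_le _ _
      -- bound first term
      have hv : ‖p.2‖ ≤ ‖x₀.2‖ + 1 := by
        have : dist p.2 x₀.2 ≤ 1 := (hsnd p x₀).trans hp1.le
        have := norm_sub_norm_le p.2 x₀.2
        rw [← dist_eq_norm] at this
        linarith
      have hT1 : ‖(Matrix.of (fun i j => F p.1 i j - F q.1 i j)).mulVec p.2‖ ≤
          n * C * (‖x₀.2‖ + 1) * dist p q ^ α := by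
        have hc : (0:ℝ) ≤ C * dist p.1 q.1 ^ α := by positivity
        calc ‖(Matrix.of (fun i j => F p.1 i j - F q.1 i j)).mulVec p.2‖
            ≤ n * (C * dist p.1 q.1 ^ α) * ‖p.2‖ := mulVec_norm_le' _ _ hc hdiff
          _ ≤ n * (C * dist p q ^ α) * (‖x₀.2‖ + 1) := by
              have h' : dist p.1 q.1 ^ α ≤ dist p q ^ α :=
                Real.rpow_le_rpow dist_nonneg (hfst p q) hα.le
              have h'' : (0:ℝ) ≤ dist p.1 q.1 ^ α := Real.rpow_nonneg dist_nonneg α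
              gcongr
          _ = n * C * (‖x₀.2‖ + 1) * dist p q ^ α := by ring
      -- bound second term
      have hT2 : ‖(Matrix.of (F q.1)).mulVec (p.2 - q.2)‖ ≤
          n * (‖F x₀.1‖ + C) * 2 ^ (1 - α) * dist p q ^ α := by
        have hc2 : (0:ℝ) ≤ ‖F x₀.1‖ + C := by positivity
        have hw2 : dist p.2 q.2 ≤ 2 := by
          calc dist p.2 q.2 ≤ dist p.2 x₀.2 + dist q.2 x₀.2 := dist_triangle_right _ _ _
            _ ≤ dist p x₀ + dist q x₀ := add_le_add (hsnd p x₀) (hsnd q x₀)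
            _ ≤ 2 := by linarith
        have hvw : ‖p.2 - q.2‖ ≤ 2 ^ (1 - α) * dist p q ^ α := by
          rw [← dist_eq_norm]
          have key : dist p.2 q.2 = dist p.2 q.2 ^ (1 - α) * dist p.2 q.2 ^ α := by
            rw [← Real.rpow_add' dist_nonneg (by norm_num)]
            norm_num
          rw [key]
          have h1 : dist p.2 q.2 ^ (1 - α) ≤ 2 ^ (1 - α) :=
            Real.rpow_le_rpow dist_nonneg hw2 (by linarith)
          have h2 : dist p.2 q.2 ^ α ≤ dist p q ^ α :=
            Real.rpow_le_rpow dist_nonneg (hsnd p q) hα.le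
          have h0 : (0:ℝ) ≤ dist p.2 q.2 ^ (1 - α) := Real.rpow_nonneg dist_nonneg _
          gcongr
        calc ‖(Matrix.of (F q.1)).mulVec (p.2 - q.2)‖
            ≤ n * (‖F x₀.1‖ + C) * ‖p.2 - q.2‖ := mulVec_norm_le' _ _ hc2 hent
          _ ≤ n * (‖F x₀.1‖ + C) * (2 ^ (1 - α) * dist p q ^ α) := by
              have h0 : (0:ℝ) ≤ 2 ^ (1 - α) * dist p q ^ α := by positivity
              gcongr
          _ = n * (‖F x₀.1‖ + C) * 2 ^ (1 - α) * dist p q ^ α := by ring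
      calc dist (f p) (f q) ≤ ‖(Matrix.of (fun i j => F p.1 i j - F q.1 i j)).mulVec p.2‖ +
            ‖(Matrix.of (F q.1)).mulVec (p.2 - q.2)‖ := hsplit
        _ ≤ n * C * (‖x₀.2‖ + 1) * dist p q ^ α +
            n * (‖F x₀.1‖ + C) * 2 ^ (1 - α) * dist p q ^ α := add_le_add hT1 hT2
        _ = B * dist p q ^ α := by rw [hB_def]; ring
    -- dimension bound
    have hdim : dimH (Set.range f) ≤ dimH (univ : Set (K × (Fin n → ℝ))) / r :=
      dimH_range_le_of_locally_holder_on hr fun x => hloc x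
    have hduniv : dimH (univ : Set (K × (Fin n → ℝ))) ≤ (d + n : ℝ≥0∞) := by
      have hiso : Isometry (fun p : K × (Fin n → ℝ) => ((p.1 : Fin d → ℝ), p.2)) :=
        isometry_subtype_coe.prodMap isometry_id
      calc dimH (univ : Set (K × (Fin n → ℝ)))
          = dimH ((fun p : K × (Fin n → ℝ) => ((p.1 : Fin d → ℝ), p.2)) '' univ) :=
            (hiso.dimH_image _).symm
        _ ≤ dimH (univ : Set ((Fin d → ℝ) × (Fin n → ℝ))) := dimH_mono (subset_univ _)
        _ = (Module.finrank ℝ ((Fin d → ℝ) × (Fin n → ℝ)) : ℝ≥0∞) := Real.dimH_univ_eq_finrank _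
        _ = (d + n : ℝ≥0∞) := by
            rw [Module.finrank_prod]
            simp
    have hlt : dimH (Set.range f) < (k : ℝ≥0) := by
      calc dimH (Set.range f) ≤ dimH (univ : Set (K × (Fin n → ℝ))) / r := hdim
        _ ≤ (d + n : ℝ≥0∞) / r := by gcongr
        _ < (k : ℝ≥0) := by
            rw [ENNReal.div_lt_iff (Or.inl (by exact_mod_cast hr.ne')) (Or.inl ENNReal.coe_ne_top)]
            have : ((d + n : ℝ≥0) : ℝ≥0∞) < (((k : ℝ≥0) * r : ℝ≥0) : ℝ≥0∞) := by
              rw [ENNReal.coe_lt_coe, ← NNReal.coe_lt_coe]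
              push_cast [hrα]
              linarith
            simpa [mul_comm] using this
    have := hausdorffMeasure_of_dimH_lt hlt
    simpa using this
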